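/- In any basic feasible solution of the ideal cut polytope, the active graph contains no path joining s and t, and consequently consists of exactly two disjoint trees, one containing s and one containing t, which together span all of V. -/

import Mathlib

/-- An ideal cut: `s ∈ S`, `t ∉ S`, and no edge of `E` enters `S` from its complement. -/
def IdealCut {V : Type*} (E : V → V → Prop) (s t : V) (S : Finset V) : Prop :=
  s ∈ S ∧ t ∉ S ∧ ∀ u v : V, E u v → v ∈ S → u ∈ S

/-- The weight of the cut: total weight of edges from `S` to its complement. -/
def cutWeight {V : Type*} [Fintype V] [DecidableEq V] (E : V → V → Prop) [DecidableRel E]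
    (w : V → V → ℚ) (S : Finset V) : ℚ :=
  ∑ q ∈ Finset.univ.filter (fun q : V × V => E q.1 q.2 ∧ q.1 ∈ S ∧ q.2 ∉ S), w q.1 q.2

/-- A maximum weight ideal cut. -/
def MaxIdealCut {V : Type*} [Fintype V] [DecidableEq V] (E : V → V → Prop) [DecidableRel E]
    (s t : V) (w : V → V → ℚ) (S : Finset V) : Prop :=
  IdealCut E s t S ∧ ∀ S' : Finset V, IdealCut E s t S' → cutWeight E w S' ≤ cutWeight E w S

/-- The directed graph is acyclic. -/
def Acyclic {V : Type*} (E : V → V → Prop) : Prop := ∀ v : V, ¬ Relation.TransGen E v v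

/-- Every vertex is reachable from `s` and reaches `t`. -/
def EveryVertexOnPath {V : Type*} (E : V → V → Prop) (s t : V) : Prop :=
  ∀ v : V, Relation.ReflTransGen E s v ∧ Relation.ReflTransGen E v t

/-- Feasibility for the LP relaxation of the maximum weight ideal cut problem. -/
def LPFeasible {V : Type*} (E : V → V → Prop) (s t : V) (y : V → ℚ) : Prop :=
  (∀ u v : V, E u v → y u ≤ y v) ∧ y s = 0 ∧ y t = 1

/-- The LP objective value `∑_{uv ∈ E} w_{uv} (y_v - y_u)`. -/
def LPValue {V : Type*} [Fintype V] (E : V → V → Prop) [DecidableRel E]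
    (w : V → V → ℚ) (y : V → ℚ) : ℚ :=
  ∑ q ∈ Finset.univ.filter (fun q : V × V => E q.1 q.2), w q.1 q.2 * (y q.2 - y q.1)

/-- Optimality for the LP relaxation. -/
def LPOptimal {V : Type*} [Fintype V] (E : V → V → Prop) [DecidableRel E]
    (s t : V) (w : V → V → ℚ) (y : V → ℚ) : Prop :=
  LPFeasible E s t y ∧ ∀ y' : V → ℚ, LPFeasible E s t y' → LPValue E w y' ≤ LPValue E w y

/-- The family of constraint (normal) vectors: the two equality constraints `y_s = 0`,
`y_t = 1` together with the vectors `y ↦ y_{p.2} - y_{p.1}` of the edge constraints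
indexed by a finite set `A` of edges. -/
noncomputable def constrFamily {V : Type*} [DecidableEq V] (s t : V) (A : Finset (V × V)) :
    (Fin 2 ⊕ {p : V × V // p ∈ A}) → (V → ℚ) :=
  Sum.elim ![Pi.single s 1, Pi.single t 1]
    (fun e => Pi.single e.1.2 1 - Pi.single e.1.1 1)

/-- `A` is a defining system of active constraints witnessing that the feasible point `y`
is a vertex (basic feasible solution) of the ideal cut polytope: the constraints of `A`
are edge constraints, active at `y`, and together with `y_s = 0`, `y_t = 1` they form
`|V|` linearly independent constraints. -/
def DefiningSystem {V : Type*} [Fintype V] [DecidableEq V] (E : V → V → Prop) (s t : V)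
    (A : Finset (V × V)) (y : V → ℚ) : Prop :=
  (∀ p ∈ A, E p.1 p.2) ∧ (∀ p ∈ A, y p.1 = y p.2) ∧
    A.card + 2 = Fintype.card V ∧
    LinearIndependent ℚ (constrFamily s t A)

/-- The (undirected simple) active graph of a set `A` of active edge constraints. -/
def activeGraph {V : Type*} [DecidableEq V] (A : Finset (V × V)) : SimpleGraph V where
  Adj u v := u ≠ v ∧ ((u, v) ∈ A ∨ (v, u) ∈ A)
  symm := by
    constructor
    intro u v h
    exact ⟨h.1.symm, h.2.symm⟩
  loopless := by
    constructor
    intro v h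
    exact h.1 rfl


open Finset SimpleGraph

section ActiveAux

variable {V : Type*} [Fintype V] [DecidableEq V]

/-- auxiliary vector of a directed pair -/
noncomputable def hvec (p : V × V) : V → ℚ := Pi.single p.2 1 - Pi.single p.1 1

lemma hvec_swap (p : V × V) : hvec (p.2, p.1) = - hvec p := by
  simp only [hvec]; abel

lemma walk_sum {G : SimpleGraph V} {a b : V} (w : G.Walk a b) :
    (w.darts.map (fun d => hvec d.toProd)).sum = Pi.single b 1 - Pi.single a 1 := by
  induction w with
  | nil => simp
  | cons h w ih =>
      rw [Walk.darts_cons, List.map_cons, List.sum_cons, ih]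
      simp only [hvec]
      abel

lemma sum_g_eq (A D : Finset (V × V))
    (hcov : ∀ p ∈ D, ((p ∈ A ∧ (p.2, p.1) ∉ A) ∨ ((p.2, p.1) ∈ A ∧ p ∉ A))) :
    ∑ e ∈ A.attach,
      (((if (e : V × V) ∈ D then (1:ℚ) else 0)
        - (if ((e : V × V).2, (e : V × V).1) ∈ D then 1 else 0)) • hvec (e : V × V))
      = ∑ p ∈ D, hvec p := by
  rw [Finset.sum_attach A (fun p => ((if p ∈ D then (1:ℚ) else 0)
        - (if (p.2, p.1) ∈ D then 1 else 0)) • hvec p)]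
  have h1 : ∀ p : V × V, ((if p ∈ D then (1:ℚ) else 0)
        - (if (p.2, p.1) ∈ D then 1 else 0)) • hvec p
      = (if p ∈ D then hvec p else 0) - (if (p.2, p.1) ∈ D then hvec p else 0) := by
    intro p
    simp [sub_smul, ite_smul]
  simp only [h1]
  rw [Finset.sum_sub_distrib, Finset.sum_ite_mem, Finset.inter_comm, ← Finset.sum_ite_mem,
    ← Finset.sum_filter, ← Finset.sum_filter]
  have h2 : ∑ p ∈ A.filter (fun p => (p.2, p.1) ∈ D), hvec p
      = ∑ q ∈ D.filter (fun q => (q.2, q.1) ∈ A), (- hvec q) := by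
    refine Finset.sum_nbij' (fun p => (p.2, p.1)) (fun q => (q.2, q.1)) ?_ ?_ ?_ ?_ ?_
    · intro a ha
      simp only [mem_filter] at ha ⊢
      exact ⟨ha.2, ha.1⟩
    · intro a ha
      simp only [mem_filter] at ha ⊢
      exact ⟨ha.2, ha.1⟩
    · intro a _; rfl
    · intro a _; rfl
    · intro a _
      rw [hvec_swap, neg_neg]
  rw [h2, Finset.sum_neg_distrib, sub_neg_eq_add]
  have h3 : D.filter (fun q => (q.2, q.1) ∈ A) = D.filter (fun q => q ∉ A) := by
    ext q
    simp only [mem_filter, and_congr_right_iff]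
    intro hq
    rcases hcov q hq with ⟨h, h'⟩ | ⟨h, h'⟩
    · constructor
      · intro hs; exact absurd hs h'
      · intro hn; exact absurd h hn
    · constructor
      · intro _; exact h'
      · intro _; exact h
  rw [h3]
  exact Finset.sum_filter_add_sum_filter_not D (fun q => q ∈ A) hvec

end ActiveAux

section ActiveAux2

variable {V : Type*} [Fintype V] [DecidableEq V]

lemma trail_dependency (A : Finset (V × V))
    (hA2 : ∀ p ∈ A, (p.2, p.1) ∉ A)
    {a b : V} (w : (activeGraph A).Walk a b) (hw : w.IsTrail) :
    ∃ g : {p : V × V // p ∈ A} → ℚ,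
      (∑ e : {p : V × V // p ∈ A}, g e • hvec (e : V × V) = Pi.single b 1 - Pi.single a 1)
      ∧ ∀ d ∈ w.darts,
          (∀ h : d.toProd ∈ A, g ⟨d.toProd, h⟩ = 1) ∧
          (∀ h : (d.toProd.2, d.toProd.1) ∈ A, g ⟨(d.toProd.2, d.toProd.1), h⟩ = -1) := by
  classical
  have hedges : w.edges = w.darts.map SimpleGraph.Dart.edge := rfl
  set L : List (V × V) := w.darts.map SimpleGraph.Dart.toProd with hL
  have hLnd : L.Nodup := by
    have hdnd : w.darts.Nodup := by
      have := hw.edges_nodup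
      rw [hedges] at this
      exact this.of_map _
    exact hdnd.map (fun d d' h => SimpleGraph.Dart.ext _ _ h)
  set D := L.toFinset with hD
  have hswap : ∀ p ∈ D, (p.2, p.1) ∉ D := by
    intro p hp hps
    rw [hD, List.mem_toFinset, hL, List.mem_map] at hp hps
    obtain ⟨d, hd, rfl⟩ := hp
    obtain ⟨d', hd', hd'e⟩ := hps
    have hedge : d'.edge = d.edge := by
      show s(d'.toProd.1, d'.toProd.2) = s(d.toProd.1, d.toProd.2)
      rw [hd'e]
      exact Sym2.eq_swap
    have hdd : d' = d :=
      List.inj_on_of_nodup_map (hedges ▸ hw.edges_nodup) hd' hd hedge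
    rw [hdd] at hd'e
    exact d.adj.ne (congrArg Prod.fst hd'e)
  refine ⟨fun e => (if (e : V × V) ∈ D then (1:ℚ) else 0)
      - (if ((e : V × V).2, (e : V × V).1) ∈ D then 1 else 0), ?_, ?_⟩
  · rw [Finset.univ_eq_attach]
    have hcov : ∀ p ∈ D, ((p ∈ A ∧ (p.2, p.1) ∉ A) ∨ ((p.2, p.1) ∈ A ∧ p ∉ A)) := by
      intro p hp
      rw [hD, List.mem_toFinset, hL, List.mem_map] at hp
      obtain ⟨d, _, rfl⟩ := hp
      have hadj : d.toProd.1 ≠ d.toProd.2 ∧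
          ((d.toProd.1, d.toProd.2) ∈ A ∨ (d.toProd.2, d.toProd.1) ∈ A) := d.adj
      rcases hadj.2 with h | h
      · exact Or.inl ⟨h, hA2 _ h⟩
      · by_cases h' : d.toProd ∈ A
        · exact Or.inl ⟨h', hA2 _ h'⟩
        · exact Or.inr ⟨h, h'⟩
    rw [sum_g_eq A D hcov, List.sum_toFinset hvec hLnd, hL, List.map_map]
    exact walk_sum w
  · intro d hd
    have hmem : d.toProd ∈ D := by
      rw [hD, List.mem_toFinset, hL, List.mem_map]
      exact ⟨d, hd, rfl⟩
    constructor
    · intro h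
      simp only [if_pos hmem, if_neg (hswap _ hmem)]
      ring
    · intro h
      have h1 : (d.toProd.2, d.toProd.1) ∉ D := hswap _ hmem
      simp only [if_neg h1]
      have h2 : ((d.toProd.2, d.toProd.1).2, (d.toProd.2, d.toProd.1).1) = d.toProd := rfl
      rw [h2, if_pos hmem]
      ring

end ActiveAux2


/-- In any basic feasible solution of the ideal cut polytope, the active graph contains
no path joining `s` and `t`, and it consists of exactly two disjoint trees, one
containing `s` and one containing `t`, which together span all of `V`:
it is acyclic, `s` and `t` are not connected, and every vertex is connected
to `s` or to `t`. -/
theorem active_graph_two_trees {V : Type*} [Fintype V] [DecidableEq V]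
    (E : V → V → Prop) [DecidableRel E] (s t : V)
    (hacyc : Acyclic E) (hpath : EveryVertexOnPath E s t)
    (y : V → ℚ) (hy : LPFeasible E s t y)
    (A : Finset (V × V)) (hA : DefiningSystem E s t A y) :
    ¬ (activeGraph A).Reachable s t ∧
      (activeGraph A).IsAcyclic ∧
      ∀ v : V, (activeGraph A).Reachable s v ∨ (activeGraph A).Reachable t v := by
  classical
  obtain ⟨-, -, hcard, hli⟩ := hA
  -- Every pair in `A` has distinct coordinates.
  have L1 : ∀ p ∈ A, p.1 ≠ p.2 := by
    intro p hp heq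
    refine hli.ne_zero (Sum.inr ⟨p, hp⟩) ?_
    show Pi.single p.2 1 - Pi.single p.1 1 = 0
    rw [heq, sub_self]
  -- `A` never contains both orientations of an edge.
  have L2 : ∀ p ∈ A, (p.2, p.1) ∉ A := by
    intro p hp hps
    set ia : Fin 2 ⊕ {q : V × V // q ∈ A} := Sum.inr ⟨p, hp⟩ with hia
    set ib : Fin 2 ⊕ {q : V × V // q ∈ A} := Sum.inr ⟨(p.2, p.1), hps⟩ with hib
    have hsum : ∑ i, ((if i = ia then (1:ℚ) else 0) + (if i = ib then 1 else 0))
        • constrFamily s t A i = 0 := by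
      simp only [add_smul, ite_smul, one_smul, zero_smul]
      rw [Finset.sum_add_distrib, Finset.sum_ite_eq' Finset.univ ia,
        Finset.sum_ite_eq' Finset.univ ib, if_pos (Finset.mem_univ _),
        if_pos (Finset.mem_univ _)]
      show (Pi.single p.2 1 - Pi.single p.1 1) + (Pi.single p.1 1 - Pi.single p.2 1) = 0
      abel
    have hz := Fintype.linearIndependent_iff.mp hli _ hsum ia
    simp only [if_pos rfl] at hz
    split_ifs at hz <;> norm_num at hz
  -- Claim 1: s and t are not connected in the active graph.
  have claim1 : ¬ (activeGraph A).Reachable s t := by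
    intro hreach
    obtain ⟨w⟩ := hreach
    obtain ⟨g, hg, -⟩ := trail_dependency A L2 (w.toPath : (activeGraph A).Path s t).1
      (w.toPath : (activeGraph A).Path s t).2.isTrail
    set G : (Fin 2 ⊕ {p : V × V // p ∈ A}) → ℚ := Sum.elim ![1, -1] g with hG
    have h2 : ∑ e : {p : V × V // p ∈ A}, G (Sum.inr e) • constrFamily s t A (Sum.inr e)
        = Pi.single t 1 - Pi.single s 1 := hg
    have hsum : ∑ i, G i • constrFamily s t A i = 0 := by
      rw [Fintype.sum_sum_type, Fin.sum_univ_two, h2]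
      show (1:ℚ) • (Pi.single s 1 : V → ℚ) + (-1:ℚ) • (Pi.single t 1 : V → ℚ)
          + ((Pi.single t 1 : V → ℚ) - Pi.single s 1) = 0
      rw [one_smul, neg_one_smul]
      abel
    have hz := Fintype.linearIndependent_iff.mp hli G hsum (Sum.inl 0)
    have : (1:ℚ) = 0 := hz
    norm_num at this
  -- Claim 2: the active graph is acyclic.
  have claim2 : (activeGraph A).IsAcyclic := by
    intro v c hc
    obtain ⟨g, hg, hval⟩ := trail_dependency A L2 c hc.isCircuit.isTrail
    set G : (Fin 2 ⊕ {p : V × V // p ∈ A}) → ℚ := Sum.elim ![0, 0] g with hG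
    have h2 : ∑ e : {p : V × V // p ∈ A}, G (Sum.inr e) • constrFamily s t A (Sum.inr e)
        = Pi.single v 1 - Pi.single v 1 := hg
    have hsum : ∑ i, G i • constrFamily s t A i = 0 := by
      rw [Fintype.sum_sum_type, Fin.sum_univ_two, h2]
      show (0:ℚ) • (Pi.single s 1 : V → ℚ) + (0:ℚ) • (Pi.single t 1 : V → ℚ)
          + ((Pi.single v 1 : V → ℚ) - Pi.single v 1) = 0
      rw [zero_smul, zero_smul, sub_self]
      abel
    have hzero := Fintype.linearIndependent_iff.mp hli G hsum
    have hlen : c.darts ≠ [] := by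
      have h3 := hc.three_le_length
      intro hnil
      rw [← SimpleGraph.Walk.length_darts, hnil] at h3
      simp at h3
    obtain ⟨d, hd⟩ : ∃ d, d ∈ c.darts := List.exists_mem_of_ne_nil _ hlen
    have hadj : d.toProd.1 ≠ d.toProd.2 ∧
        ((d.toProd.1, d.toProd.2) ∈ A ∨ (d.toProd.2, d.toProd.1) ∈ A) := d.adj
    rcases hadj.2 with h | h
    · have h1 := (hval d hd).1 (by rwa [Prod.mk.eta] at h)
      have hz : g ⟨d.toProd, by rwa [Prod.mk.eta] at h⟩ = 0 := hzero (Sum.inr _)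
      rw [h1] at hz
      norm_num at hz
    · have h1 := (hval d hd).2 h
      have hz : g ⟨(d.toProd.2, d.toProd.1), h⟩ = 0 := hzero (Sum.inr _)
      rw [h1] at hz
      norm_num at hz
  -- The constraint family spans everything.
  have hspan : Submodule.span ℚ (Set.range (constrFamily s t A)) = ⊤ := by
    apply hli.span_eq_top_of_card_eq_finrank
    rw [Module.finrank_pi, Fintype.card_sum, Fintype.card_fin, Fintype.card_coe]
    omega
  refine ⟨claim1, claim2, ?_⟩
  -- Claim 3: every vertex is connected to s or t.
  intro v
  by_contra hcon
  push_neg at hcon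
  set C : Finset V := Finset.univ.filter (fun u => (activeGraph A).Reachable v u) with hC
  set φ : (V → ℚ) →ₗ[ℚ] ℚ :=
    { toFun := fun x => ∑ u ∈ C, x u,
      map_add' := fun x y => by simp [Finset.sum_add_distrib],
      map_smul' := fun c x => by simp [Finset.mul_sum] } with hφ
  have hsing : ∀ a : V, φ (Pi.single a 1) = if a ∈ C then 1 else 0 := by
    intro a
    show ∑ u ∈ C, Pi.single a (1:ℚ) u = _
    simp [Pi.single_apply, Finset.sum_ite_eq']
  have hker : ∀ x : V → ℚ, φ x = 0 := by
    have hle : Submodule.span ℚ (Set.range (constrFamily s t A)) ≤ LinearMap.ker φ := by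
      rw [Submodule.span_le]
      rintro x ⟨i, rfl⟩
      rw [SetLike.mem_coe, LinearMap.mem_ker]
      rcases i with i | e
      · fin_cases i
        · have hs : s ∉ C := by
            simp only [hC, Finset.mem_filter, Finset.mem_univ, true_and]
            exact fun h => hcon.1 h.symm
          show φ (Pi.single s 1) = 0
          rw [hsing, if_neg hs]
        · have ht : t ∉ C := by
            simp only [hC, Finset.mem_filter, Finset.mem_univ, true_and]
            exact fun h => hcon.2 h.symm
          show φ (Pi.single t 1) = 0
          rw [hsing, if_neg ht]
      · show φ (Pi.single e.1.2 1 - Pi.single e.1.1 1) = 0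
        rw [map_sub, hsing, hsing]
        have hadj : (activeGraph A).Adj e.1.1 e.1.2 :=
          ⟨L1 _ e.2, Or.inl (by rw [Prod.mk.eta]; exact e.2)⟩
        have hiff : e.1.1 ∈ C ↔ e.1.2 ∈ C := by
          simp only [hC, Finset.mem_filter, Finset.mem_univ, true_and]
          exact ⟨fun h => h.trans hadj.reachable, fun h => h.trans hadj.symm.reachable⟩
        simp only [hiff]
        rw [sub_self]
    intro x
    have hx : x ∈ Submodule.span ℚ (Set.range (constrFamily s t A)) := by
      rw [hspan]; trivial
    exact hle hx
  have hv : φ (Pi.single v 1) = 1 := by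
    rw [hsing]
    have hvC : v ∈ C := by
      simp only [hC, Finset.mem_filter, Finset.mem_univ, true_and]
      exact SimpleGraph.Reachable.refl v
    rw [if_pos hvC]
  rw [hker] at hv
  norm_num at hv
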